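/- Let 0 < d < n be integers, let E ⊆ ℝⁿ be d-lower content regular with constant c₀ > 0, let a ∈ E, and let V be a d-dimensional linear subspace of ℝⁿ such that for every 0 < s < 1, lim_{r→0} r^{-d} · ℋ^d(E ∩ B(a,r) \ X(a,V,s)) = 0, where X(a,V,s) = {x ∈ ℝⁿ : dist(x−a, V) < s|x−a|} (i.e. V is an approximate tangent d-plane for E at a). Then a is a tangent point of E with tangent plane a + V; that is, lim_{t→0} sup_{y ∈ E ∩ B(a,t)} dist(y, a + V)/t = 0. -/

import Mathlib

open Set Metric MeasureTheory ENNReal Filter Topology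

noncomputable def hContent {n : ℕ} (d : ℕ) (A : Set (EuclideanSpace ℝ (Fin n))) : ℝ≥0∞ :=
  ⨅ (C : ℕ → Set (EuclideanSpace ℝ (Fin n))) (_ : A ⊆ ⋃ i, C i),
    ∑' i, EMetric.diam (C i) ^ d

def LowerContentRegular {n : ℕ} (d : ℕ) (c₀ : ℝ) (E : Set (EuclideanSpace ℝ (Fin n))) : Prop :=
  ∀ x ∈ E, ∀ r : ℝ, 0 < r → ENNReal.ofReal r < EMetric.diam E →
    ENNReal.ofReal (c₀ * r ^ d) ≤ hContent d (E ∩ ball x r)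

def IsAffinePlane {n : ℕ} (d : ℕ) (L : Set (EuclideanSpace ℝ (Fin n))) : Prop :=
  ∃ (z : EuclideanSpace ℝ (Fin n)) (V : Submodule ℝ (EuclideanSpace ℝ (Fin n))),
    Module.finrank ℝ V = d ∧ L = {y | y - z ∈ V}

noncomputable def beta {n : ℕ} (d : ℕ) (p : ℝ) (E : Set (EuclideanSpace ℝ (Fin n)))
    (x : EuclideanSpace ℝ (Fin n)) (r : ℝ) : ℝ≥0∞ :=
  ⨅ (L : Set (EuclideanSpace ℝ (Fin n))) (_ : IsAffinePlane d L),
    ((∫⁻ t in Ioo (0:ℝ) 1,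
        hContent d {y | y ∈ ball x r ∩ E ∧ t * r < infDist y L} *
          ENNReal.ofReal (t ^ (p - 1))) / ENNReal.ofReal r ^ d) ^ (1 / p)

def TangentPoint {n : ℕ} (d : ℕ) (E : Set (EuclideanSpace ℝ (Fin n)))
    (x : EuclideanSpace ℝ (Fin n)) : Prop :=
  ∃ L : Set (EuclideanSpace ℝ (Fin n)), IsAffinePlane d L ∧
    Tendsto (fun t : ℝ => ⨆ y ∈ E ∩ ball x t, infDist y L / t) (𝓝[>] 0) (𝓝 0)

lemma hContent_le_hausdorff {n d : ℕ} (hd : 0 < d) (A : Set (EuclideanSpace ℝ (Fin n))) :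
    hContent d A ≤ μH[(d : ℝ)] A := by
  rw [MeasureTheory.Measure.hausdorffMeasure_apply]
  refine le_trans ?_ (le_iSup₂ (1 : ℝ≥0∞) zero_lt_one)
  refine le_iInf₂ fun C hC => le_iInf fun _ => ?_
  refine le_trans (iInf₂_le C hC) (ENNReal.tsum_le_tsum fun i => ?_)
  rcases (C i).eq_empty_or_nonempty with h | h
  · simp [h, zero_pow hd.ne', hd.ne', show EMetric.diam (∅ : Set (EuclideanSpace ℝ (Fin n))) = 0 from Metric.ediam_empty]
  · rw [iSup_pos h, ← ENNReal.rpow_natCast]; exact le_rfl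

lemma infDist_sub_plane {n : ℕ} (a y : EuclideanSpace ℝ (Fin n))
    (V : Submodule ℝ (EuclideanSpace ℝ (Fin n))) :
    infDist y {z | z - a ∈ V} = infDist (y - a) (V : Set (EuclideanSpace ℝ (Fin n))) := by
  have himg : {z : EuclideanSpace ℝ (Fin n) | z - a ∈ V} =
      (fun v => v + a) '' (V : Set (EuclideanSpace ℝ (Fin n))) := by
    ext z
    constructor
    · intro h; exact ⟨z - a, h, by module⟩
    · rintro ⟨v, hv, rfl⟩; simpa using hv
  have hiso : Isometry (fun v : EuclideanSpace ℝ (Fin n) => v + a) :=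
    Isometry.of_dist_eq fun x y => by simp [dist_add_right]
  calc infDist y {z | z - a ∈ V}
      = infDist ((y - a) + a) ((fun v => v + a) '' (V : Set (EuclideanSpace ℝ (Fin n)))) := by
        rw [himg, sub_add_cancel]
    _ = infDist (y - a) (V : Set (EuclideanSpace ℝ (Fin n))) := infDist_image hiso

theorem stmt10 {n d : ℕ} (hd : 0 < d) (hdn : d < n)
    (E : Set (EuclideanSpace ℝ (Fin n))) (c₀ : ℝ) (hc₀ : 0 < c₀)
    (hE : LowerContentRegular d c₀ E)
    (a : EuclideanSpace ℝ (Fin n)) (ha : a ∈ E)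
    (V : Submodule ℝ (EuclideanSpace ℝ (Fin n))) (hV : Module.finrank ℝ V = d)
    (happrox : ∀ s : ℝ, 0 < s → s < 1 →
      Tendsto (fun r : ℝ =>
          μH[(d : ℝ)] ((E ∩ ball a r) \
            {x | infDist (x - a) (V : Set (EuclideanSpace ℝ (Fin n))) < s * dist x a}) /
          ENNReal.ofReal (r ^ d))
        (𝓝[>] 0) (𝓝 0)) :
    Tendsto (fun t : ℝ => ⨆ y ∈ E ∩ ball a t, infDist y {z | z - a ∈ V} / t)
      (𝓝[>] 0) (𝓝 0) := by
  have haL : a ∈ {z : EuclideanSpace ℝ (Fin n) | z - a ∈ V} := by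
    simp [Submodule.zero_mem]
  rw [Metric.tendsto_nhdsWithin_nhds]
  intro ε hε
  set s : ℝ := min ε 1 / 2 with hs_def
  have hs0 : 0 < s := by
    have : 0 < min ε 1 := lt_min hε one_pos
    positivity
  have hs1 : s ≤ 1 / 2 := by
    have : min ε 1 ≤ 1 := min_le_right _ _
    rw [hs_def]; linarith
  have hsε : s < ε := by
    have h1 : min ε 1 ≤ ε := min_le_left _ _
    have : 0 < min ε 1 := lt_min hε one_pos
    rw [hs_def]; linarith
  have hs'0 : 0 < s / 4 := by positivity
  have hs'1 : s / 4 < 1 := by linarith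
  -- positive constant
  have hcpos : (0 : ℝ≥0∞) < ENNReal.ofReal (c₀ * (s / 4) ^ d) :=
    ENNReal.ofReal_pos.mpr (by positivity)
  have hev : ∀ᶠ r in 𝓝[>] (0 : ℝ),
      μH[(d : ℝ)] ((E ∩ ball a r) \
          {x | infDist (x - a) (V : Set (EuclideanSpace ℝ (Fin n))) < s / 4 * dist x a}) /
        ENNReal.ofReal (r ^ d) < ENNReal.ofReal (c₀ * (s / 4) ^ d) :=
    (happrox (s / 4) hs'0 hs'1).eventually_lt_const hcpos
  obtain ⟨δ₁, hδ₁pos, hδ₁⟩ := Metric.mem_nhdsWithin_iff.mp hev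
  -- δ₂ taking care of the diameter condition
  obtain ⟨δ₂, hδ₂pos, hδ₂⟩ : ∃ δ₂ > (0 : ℝ), E.Subsingleton ∨
      ∀ t : ℝ, 0 < t → t < δ₂ → ENNReal.ofReal (s * t / 2) < EMetric.diam E := by
    rcases eq_or_ne (EMetric.diam E) 0 with h0 | h0
    · exact ⟨1, one_pos, Or.inl (EMetric.diam_eq_zero_iff.mp h0)⟩
    rcases eq_or_ne (EMetric.diam E) ⊤ with htop | htop
    · exact ⟨1, one_pos, Or.inr fun t _ _ => by
        rw [htop]; exact ENNReal.ofReal_lt_top⟩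
    · refine ⟨(EMetric.diam E).toReal, ?_, Or.inr fun t ht htlt => ?_⟩
      · exact ENNReal.toReal_pos h0 htop
      · have h1 : s * t / 2 < (EMetric.diam E).toReal := by nlinarith
        calc ENNReal.ofReal (s * t / 2) < ENNReal.ofReal (EMetric.diam E).toReal :=
              ENNReal.ofReal_lt_ofReal_iff_of_nonneg (by positivity) |>.mpr h1
          _ = EMetric.diam E := ENNReal.ofReal_toReal htop
  refine ⟨min (δ₁ / 2) δ₂, by positivity, fun {t} ht hdist => ?_⟩
  rw [mem_Ioi] at ht
  rw [Real.dist_eq, sub_zero, abs_of_pos ht] at hdist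
  have htδ₁ : 2 * t < δ₁ := by
    have := lt_of_lt_of_le hdist (min_le_left _ _); linarith
  have htδ₂ : t < δ₂ := lt_of_lt_of_le hdist (min_le_right _ _)
  -- the sup is ≤ s
  have key : ∀ y ∈ E ∩ ball a t, infDist y {z : EuclideanSpace ℝ (Fin n) | z - a ∈ V} / t ≤ s := by
    rintro y ⟨hyE, hyb⟩
    rw [div_le_iff₀ ht]
    rcases hδ₂ with hsub | hdiam
    · have hya : y = a := hsub hyE ha
      rw [hya, infDist_zero_of_mem haL]
      positivity
    by_contra hcon
    push_neg at hcon
    have hcon' : s * t < infDist (y - a) (V : Set (EuclideanSpace ℝ (Fin n))) := by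
      rwa [infDist_sub_plane] at hcon
    rw [mem_ball] at hyb
    set ρ : ℝ := s * t / 2 with hρ_def
    have hρpos : 0 < ρ := by positivity
    -- lower bound on the Hausdorff measure of the bad set
    have hsubset : E ∩ ball y ρ ⊆ (E ∩ ball a (2 * t)) \
        {x | infDist (x - a) (V : Set (EuclideanSpace ℝ (Fin n))) < s / 4 * dist x a} := by
      rintro x ⟨hxE, hxb⟩
      rw [mem_ball] at hxb
      have hxa : dist x a < 2 * t := by
        have h1 : dist x a ≤ dist x y + dist y a := dist_triangle x y a
        have h2 : ρ ≤ t / 4 := by nlinarith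
        linarith
      refine ⟨⟨hxE, mem_ball.mpr hxa⟩, ?_⟩
      intro hbad
      rw [mem_setOf_eq] at hbad
      have h3 : infDist (y - a) (V : Set (EuclideanSpace ℝ (Fin n))) ≤
          infDist (x - a) (V : Set (EuclideanSpace ℝ (Fin n))) + dist (y - a) (x - a) :=
        infDist_le_infDist_add_dist
      have h4 : dist (y - a) (x - a) = dist y x := dist_sub_right y x a
      have h5 : dist y x < ρ := by rw [dist_comm]; exact hxb
      have h6 : s * t / 2 < infDist (x - a) (V : Set (EuclideanSpace ℝ (Fin n))) := by
        rw [h4] at h3; linarith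
      have h7 : s / 4 * dist x a < s * t / 2 := by nlinarith
      linarith
    have hlow : ENNReal.ofReal (c₀ * ρ ^ d) ≤
        μH[(d : ℝ)] ((E ∩ ball a (2 * t)) \
          {x | infDist (x - a) (V : Set (EuclideanSpace ℝ (Fin n))) < s / 4 * dist x a}) := by
      calc ENNReal.ofReal (c₀ * ρ ^ d) ≤ hContent d (E ∩ ball y ρ) :=
            hE y hyE ρ hρpos (hdiam t ht htδ₂)
        _ ≤ μH[(d : ℝ)] (E ∩ ball y ρ) := hContent_le_hausdorff hd _
        _ ≤ _ := measure_mono hsubset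
    -- compare with the smallness from happrox at radius 2t
    have h2t : (2 * t) ∈ ball (0 : ℝ) δ₁ ∩ Ioi 0 := by
      constructor
      · rw [mem_ball, Real.dist_eq, sub_zero, abs_of_pos (by linarith)]; exact htδ₁
      · exact mem_Ioi.mpr (by linarith)
    have hsmall := hδ₁ h2t
    rw [mem_setOf_eq] at hsmall
    have hbig : ENNReal.ofReal (c₀ * (s / 4) ^ d) ≤
        μH[(d : ℝ)] ((E ∩ ball a (2 * t)) \
          {x | infDist (x - a) (V : Set (EuclideanSpace ℝ (Fin n))) < s / 4 * dist x a}) /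
        ENNReal.ofReal ((2 * t) ^ d) := by
      rw [ENNReal.le_div_iff_mul_le (Or.inl ?_) (Or.inl ENNReal.ofReal_ne_top)]
      · calc ENNReal.ofReal (c₀ * (s / 4) ^ d) * ENNReal.ofReal ((2 * t) ^ d)
            = ENNReal.ofReal (c₀ * (s / 4) ^ d * (2 * t) ^ d) :=
              (ENNReal.ofReal_mul (by positivity)).symm
          _ = ENNReal.ofReal (c₀ * ρ ^ d) := by
              congr 1
              rw [mul_assoc, ← mul_pow, hρ_def]
              ring_nf
          _ ≤ _ := hlow
      · exact (ENNReal.ofReal_pos.mpr (by positivity)).ne'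
    exact absurd (lt_of_le_of_lt hbig hsmall) (lt_irrefl _)
  -- conclude
  have hnonneg : (0 : ℝ) ≤ ⨆ y ∈ E ∩ ball a t,
      infDist y {z : EuclideanSpace ℝ (Fin n) | z - a ∈ V} / t :=
    Real.iSup_nonneg fun y => Real.iSup_nonneg fun _ =>
      div_nonneg infDist_nonneg ht.le
  have hsup : (⨆ y ∈ E ∩ ball a t,
      infDist y {z : EuclideanSpace ℝ (Fin n) | z - a ∈ V} / t) ≤ s := by
    refine Real.iSup_le (fun y => Real.iSup_le (fun hy => key y hy) hs0.le) hs0.le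
  rw [Real.dist_eq, sub_zero, abs_of_nonneg hnonneg]
  exact lt_of_le_of_lt hsup hsε
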